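/- arXiv:0706.1072 — 2 statements merged into one kernel-verified Lean document; each statement's English description precedes it below -/
import Mathlib

section
/- Let A be an abelian category equipped with additive functions rk, deg : Ob(A) → ℤ (additive on short exact sequences) such that rk(X) > 0 for every nonzero object X. For a nonzero object V define μ(V) = deg(V)/rk(V) ∈ ℚ, and call V semistable of slope μ if μ(V) = μ and for every nonzero proper subobject F ⊆ V one has μ(F) ≤ μ. Then for any map φ : F → G between semistable objects of the same slope μ, both ker(φ) and coker(φ) are either zero or semistable of slope μ. Consequently, the full subcategory of semistable objects of slope μ (together with the zero object) is an abelian subcategory of A. -/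
open CategoryTheory CategoryTheory.Limits

/-- The objSlope of an object: degree divided by rank, as a rational number. -/
def objSlope {C : Type*} [Category C] (rk deg : C → ℤ) (X : C) : ℚ :=
  (deg X : ℚ) / (rk X : ℚ)

/-- A nonzero object `V` is semistable of objSlope `μ` if `μ(V) = μ` and every nonzero
proper subobject `F ⊆ V` satisfies `μ(F) ≤ μ`. -/
def Semistable {C : Type*} [Category C] [Abelian C] (rk deg : C → ℤ) (μ : ℚ) (V : C) : Prop :=
  ¬ IsZero V ∧ objSlope rk deg V = μ ∧
    ∀ (F : C) (f : F ⟶ V), Mono f → ¬ IsZero F → ¬ IsIso f → objSlope rk deg F ≤ μ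

section Aux

variable {C : Type*} [Category C] [Abelian C] (rk deg : C → ℤ)
  (hrk : ∀ S : ShortComplex C, S.ShortExact → rk S.X₂ = rk S.X₁ + rk S.X₃)
  (hdeg : ∀ S : ShortComplex C, S.ShortExact → deg S.X₂ = deg S.X₁ + deg S.X₃)
  (hrkpos : ∀ X : C, ¬ IsZero X → 0 < rk X)

lemma aux_ses_of_mono {A B : C} (i : A ⟶ B) [Mono i] :
    (ShortComplex.mk i (cokernel.π i) (cokernel.condition i)).ShortExact :=
  { exact := ShortComplex.exact_of_g_is_cokernel _ (cokernelIsCokernel i) }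

lemma aux_ses_of_epi {B X : C} (p : B ⟶ X) [Epi p] :
    (ShortComplex.mk (kernel.ι p) p (kernel.condition p)).ShortExact :=
  { exact := ShortComplex.exact_of_f_is_kernel _ (kernelIsKernel p) }

include hrk in
lemma aux_rk_isZero {Z : C} (hZ : IsZero Z) : rk Z = 0 := by
  have hse : (ShortComplex.mk (𝟙 Z) (𝟙 Z) (hZ.eq_of_src _ _)).ShortExact :=
    { exact := ShortComplex.exact_of_isZero_X₂ _ hZ }
  have h := hrk _ hse
  simp only [ShortComplex.mk] at h
  omega

include hdeg in
lemma aux_deg_isZero {Z : C} (hZ : IsZero Z) : deg Z = 0 := by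
  have hse : (ShortComplex.mk (𝟙 Z) (𝟙 Z) (hZ.eq_of_src _ _)).ShortExact :=
    { exact := ShortComplex.exact_of_isZero_X₂ _ hZ }
  have h := hdeg _ hse
  simp only [ShortComplex.mk] at h
  omega

include hrk hdeg in
lemma aux_iso_inv {A B : C} (e : A ≅ B) : rk A = rk B ∧ deg A = deg B := by
  have hz : IsZero (cokernel e.hom) := by
    have h0 : Epi (0 : B ⟶ cokernel e.hom) := by
      rw [← cokernel.π_of_epi e.hom]; infer_instance
    exact IsZero.of_epi_zero B _
  have hse := aux_ses_of_mono e.hom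
  have h1 := hrk _ hse
  have h2 := hdeg _ hse
  have h3 := aux_rk_isZero rk hrk hz
  have h4 := aux_deg_isZero deg hdeg hz
  simp only [ShortComplex.mk] at h1 h2
  omega

include hrkpos in
lemma aux_deg_eq {μ : ℚ} {V : C} (hV : Semistable rk deg μ V) :
    (deg V : ℚ) = μ * rk V := by
  have hpos := hrkpos V hV.1
  have hne : (rk V : ℚ) ≠ 0 := by exact_mod_cast hpos.ne'
  have := hV.2.1
  rw [objSlope, div_eq_iff hne] at this
  linarith [this]

include hrkpos in
lemma aux_sub_bound {μ : ℚ} {G : C} (hG : Semistable rk deg μ G)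
    (hrkeq : ∀ A B : C, (A ≅ B) → rk A = rk B ∧ deg A = deg B)
    {X : C} (i : X ⟶ G) [Mono i] (hX : ¬ IsZero X) :
    (deg X : ℚ) ≤ μ * rk X := by
  by_cases hi : IsIso i
  · obtain ⟨h1, h2⟩ := hrkeq X G (asIso i)
    rw [h1, h2]
    exact le_of_eq (aux_deg_eq rk deg hrkpos hG)
  · have h := hG.2.2 X i inferInstance hX hi
    have hpos := hrkpos X hX
    have hposQ : (0 : ℚ) < rk X := by exact_mod_cast hpos
    rw [objSlope, div_le_iff₀ hposQ] at h
    exact h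

include hrk hdeg hrkpos in
lemma aux_quot_bound {μ : ℚ} {F : C} (hF : Semistable rk deg μ F)
    {X : C} (p : F ⟶ X) [Epi p] (hX : ¬ IsZero X) :
    μ * rk X ≤ (deg X : ℚ) := by
  have hrkeq : ∀ A B : C, (A ≅ B) → rk A = rk B ∧ deg A = deg B :=
    fun A B e => aux_iso_inv rk deg hrk hdeg e
  by_cases hK : IsZero (kernel p)
  · have : kernel.ι p = 0 := hK.eq_of_src _ _
    have : Mono p := Abelian.mono_of_kernel_ι_eq_zero p this
    have : IsIso p := isIso_of_mono_of_epi p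
    obtain ⟨h1, h2⟩ := hrkeq F X (asIso p)
    rw [← h1, ← h2]
    exact le_of_eq (aux_deg_eq rk deg hrkpos hF).symm
  · have hse := aux_ses_of_epi p
    have h1 := hrk _ hse
    have h2 := hdeg _ hse
    simp only [ShortComplex.mk] at h1 h2
    have hsub : (deg (kernel p) : ℚ) ≤ μ * rk (kernel p) :=
      aux_sub_bound rk deg hrkpos hF hrkeq (kernel.ι p) hK
    have h1Q : (rk F : ℚ) = rk (kernel p) + rk X := by exact_mod_cast h1
    have h2Q : (deg F : ℚ) = deg (kernel p) + deg X := by exact_mod_cast h2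
    have hdF := aux_deg_eq rk deg hrkpos hF
    have hm : μ * (rk F : ℚ) = μ * rk (kernel p) + μ * rk X := by rw [h1Q]; ring
    linarith

include hrk hdeg in
lemma aux_semistable_of_iso {μ : ℚ} {A B : C} (e : A ≅ B)
    (hA : Semistable rk deg μ A) : Semistable rk deg μ B := by
  obtain ⟨h1, h2⟩ := aux_iso_inv rk deg hrk hdeg e
  refine ⟨fun hz => hA.1 (hz.of_iso e), ?_, ?_⟩
  · rw [← hA.2.1, objSlope, objSlope, h1, h2]
  · intro F f hf hF hiso
    have : Mono (f ≫ e.inv) := mono_comp _ _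
    refine hA.2.2 F (f ≫ e.inv) this hF (fun h => hiso ?_)
    have : f = (f ≫ e.inv) ≫ e.hom := by simp
    rw [this]
    infer_instance

end Aux

theorem stmt1 {C : Type*} [Category C] [Abelian C] (rk deg : C → ℤ)
    (hrk : ∀ S : ShortComplex C, S.ShortExact → rk S.X₂ = rk S.X₁ + rk S.X₃)
    (hdeg : ∀ S : ShortComplex C, S.ShortExact → deg S.X₂ = deg S.X₁ + deg S.X₃)
    (hrkpos : ∀ X : C, ¬ IsZero X → 0 < rk X)
    (μ : ℚ) (F G : C) (φ : F ⟶ G)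
    (hF : Semistable rk deg μ F) (hG : Semistable rk deg μ G) :
    (IsZero (kernel φ) ∨ Semistable rk deg μ (kernel φ)) ∧
    (IsZero (cokernel φ) ∨ Semistable rk deg μ (cokernel φ)) := by
  have hrkeq : ∀ A B : C, (A ≅ B) → rk A = rk B ∧ deg A = deg B :=
    fun A B e => aux_iso_inv rk deg hrk hdeg e
  set I := Abelian.coimage φ with hI
  set p : F ⟶ I := Abelian.coimage.π φ with hp
  set i : I ⟶ G := Abelian.factorThruCoimage φ with hi
  have hfac : p ≫ i = φ := Abelian.coimage.fac φ
  by_cases hIz : IsZero I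
  · -- φ = 0; kernel ≅ F, cokernel ≅ G
    have hφ0 : φ = 0 := by
      rw [← hfac]
      have : i = 0 := hIz.eq_of_src _ _
      rw [this, comp_zero]
    constructor
    · right
      have e : F ≅ kernel φ := (kernelZeroIsoSource.symm ≪≫ kernelIsoOfEq hφ0.symm)
      exact aux_semistable_of_iso rk deg hrk hdeg e hF
    · right
      have e : G ≅ cokernel φ := (cokernelZeroIsoTarget.symm ≪≫ cokernelIsoOfEq hφ0.symm)
      exact aux_semistable_of_iso rk deg hrk hdeg e hG
  · -- I nonzero : deg I = μ rk I
    have hIsub : (deg I : ℚ) ≤ μ * rk I :=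
      aux_sub_bound rk deg hrkpos hG hrkeq i hIz
    have hIquot : μ * rk I ≤ (deg I : ℚ) :=
      aux_quot_bound rk deg hrk hdeg hrkpos hF p hIz
    have hIdeg : (deg I : ℚ) = μ * rk I := le_antisymm hIsub hIquot
    constructor
    · -- kernel
      by_cases hKz : IsZero (kernel φ)
      · exact Or.inl hKz
      · right
        -- SES kernel φ → F → I (since I = cokernel (kernel.ι φ))
        have hse : (ShortComplex.mk (kernel.ι φ) (cokernel.π (kernel.ι φ))
            (cokernel.condition _)).ShortExact := aux_ses_of_mono (kernel.ι φ)
        have h1 := hrk _ hse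
        have h2 := hdeg _ hse
        simp only [ShortComplex.mk] at h1 h2
        have h1Q : (rk F : ℚ) = rk (kernel φ) + rk I := by exact_mod_cast h1
        have h2Q : (deg F : ℚ) = deg (kernel φ) + deg I := by exact_mod_cast h2
        have hdF := aux_deg_eq rk deg hrkpos hF
        have hm : μ * (rk F : ℚ) = μ * rk (kernel φ) + μ * rk I := by rw [h1Q]; ring
        have hKdeg : (deg (kernel φ) : ℚ) = μ * rk (kernel φ) := by linarith
        have hKpos : (0 : ℚ) < rk (kernel φ) := by exact_mod_cast hrkpos _ hKz
        refine ⟨hKz, ?_, ?_⟩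
        · rw [objSlope, hKdeg, mul_div_assoc, div_self hKpos.ne', mul_one]
        · intro F' f hf hF' _
          have : Mono (f ≫ kernel.ι φ) := mono_comp _ _
          have hb : (deg F' : ℚ) ≤ μ * rk F' :=
            aux_sub_bound rk deg hrkpos hF hrkeq (f ≫ kernel.ι φ) hF'
          have hF'pos : (0 : ℚ) < rk F' := by exact_mod_cast hrkpos _ hF'
          rw [objSlope, div_le_iff₀ hF'pos]
          exact hb
    · -- cokernel
      by_cases hQz : IsZero (cokernel φ)
      · exact Or.inl hQz
      · right
        have eQ : cokernel i ≅ cokernel φ :=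
          (cokernelEpiComp p i).symm ≪≫ cokernelIsoOfEq hfac
        refine aux_semistable_of_iso rk deg hrk hdeg eQ ?_
        have hCz : ¬ IsZero (cokernel i) := fun h => hQz (h.of_iso eQ.symm)
        have hse := aux_ses_of_mono i
        have h1 := hrk _ hse
        have h2 := hdeg _ hse
        simp only [ShortComplex.mk] at h1 h2
        have h1Q : (rk G : ℚ) = rk I + rk (cokernel i) := by exact_mod_cast h1
        have h2Q : (deg G : ℚ) = deg I + deg (cokernel i) := by exact_mod_cast h2
        have hdG := aux_deg_eq rk deg hrkpos hG
        have hm : μ * (rk G : ℚ) = μ * rk I + μ * rk (cokernel i) := by rw [h1Q]; ring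
        have hQdeg : (deg (cokernel i) : ℚ) = μ * rk (cokernel i) := by linarith
        have hQpos : (0 : ℚ) < rk (cokernel i) := by exact_mod_cast hrkpos _ hCz
        refine ⟨hCz, ?_, ?_⟩
        · rw [objSlope, hQdeg, mul_div_assoc, div_self hQpos.ne', mul_one]
        · intro F' f hf hF' hiso
          -- use the quotient cokernel i → cokernel f ; G ↠ cokernel f
          have hQ'z : ¬ IsZero (cokernel f) := by
            intro h
            have : cokernel.π f = 0 := h.eq_of_tgt _ _
            have : Epi f := Abelian.epi_of_cokernel_π_eq_zero f this
            exact hiso (isIso_of_mono_of_epi f)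
          have hq : Epi (cokernel.π i ≫ cokernel.π f) := epi_comp _ _
          have hqb : μ * rk (cokernel f) ≤ (deg (cokernel f) : ℚ) :=
            aux_quot_bound rk deg hrk hdeg hrkpos hG (cokernel.π i ≫ cokernel.π f) hQ'z
          have hse2 := aux_ses_of_mono f
          have h3 := hrk _ hse2
          have h4 := hdeg _ hse2
          simp only [ShortComplex.mk] at h3 h4
          have h3Q : (rk (cokernel i) : ℚ) = rk F' + rk (cokernel f) := by exact_mod_cast h3
          have h4Q : (deg (cokernel i) : ℚ) = deg F' + deg (cokernel f) := by exact_mod_cast h4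
          have hF'pos : (0 : ℚ) < rk F' := by exact_mod_cast hrkpos _ hF'
          rw [objSlope, div_le_iff₀ hF'pos]
          have hm2 : μ * (rk (cokernel i) : ℚ) = μ * rk F' + μ * rk (cokernel f) := by
            rw [h3Q]; ring
          linarith
end

section
/- Let A be an abelian category with additive functions rk, deg as above (rk strictly positive on nonzero objects), and fix μ ∈ ℚ. Every semistable object of slope μ has finite length in the abelian category of semistable objects of slope μ, and the simple objects of this category are exactly the stable objects of slope μ (those nonzero V with μ(V) = μ such that every nonzero proper subobject F satisfies μ(F) < μ). -/
open CategoryTheory CategoryTheory.Limits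

/-- A nonzero object `V` is stable of objSlope `μ` if `μ(V) = μ` and every nonzero
proper subobject `F ⊆ V` satisfies `μ(F) < μ`. -/
def Stable {C : Type*} [Category C] [Abelian C] (rk deg : C → ℤ) (μ : ℚ) (V : C) : Prop :=
  ¬ IsZero V ∧ objSlope rk deg V = μ ∧
    ∀ (F : C) (f : F ⟶ V), Mono f → ¬ IsZero F → ¬ IsIso f → objSlope rk deg F < μ

open scoped ZeroObject

set_option linter.unusedSectionVars false

namespace Stmt2Aux

/-! ### Rational arithmetic (mediant) lemmas -/

lemma med_le {μ d1 d3 r1 r3 : ℚ} (h1 : 0 < r1) (h3 : 0 < r3)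
    (hsum : (d1 + d3) / (r1 + r3) = μ) : d1 / r1 ≤ μ ↔ μ ≤ d3 / r3 := by
  have h13 : (0:ℚ) < r1 + r3 := by linarith
  rw [div_eq_iff h13.ne'] at hsum
  rw [div_le_iff₀ h1, le_div_iff₀ h3]
  constructor <;> intro h <;> nlinarith

lemma med_eq {μ d1 d3 r1 r3 : ℚ} (h1 : 0 < r1) (h3 : 0 < r3)
    (hsum : (d1 + d3) / (r1 + r3) = μ) : d1 / r1 = μ ↔ d3 / r3 = μ := by
  have h13 : (0:ℚ) < r1 + r3 := by linarith
  rw [div_eq_iff h13.ne'] at hsum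
  rw [div_eq_iff h1.ne', div_eq_iff h3.ne']
  constructor <;> intro h <;> nlinarith

/-! ### Categorical helper lemmas -/

variable {C : Type*} [Category C] [Abelian C]

lemma isIso_of_comp_mono {G F V : C} (g : G ⟶ F) (f : F ⟶ V) [Mono f]
    (h : IsIso (g ≫ f)) : IsIso g := by
  refine ⟨f ≫ inv (g ≫ f), ?_, ?_⟩
  · rw [← Category.assoc, IsIso.hom_inv_id]
  · rw [← cancel_mono f]
    simp

lemma sesMono {F V : C} (f : F ⟶ V) [Mono f] :
    (ShortComplex.mk f (cokernel.π f) (cokernel.condition f)).ShortExact :=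
  { exact := ShortComplex.exact_of_g_is_cokernel _ (cokernelIsCokernel f) }

lemma sesEpi {V Q : C} (g : V ⟶ Q) [Epi g] :
    (ShortComplex.mk (kernel.ι g) g (kernel.condition g)).ShortExact :=
  { exact := ShortComplex.exact_of_f_is_kernel _ (kernelIsKernel g) }

lemma notIsZero_cokernel {F V : C} (f : F ⟶ V) [Mono f] (hni : ¬ IsIso f) :
    ¬ IsZero (cokernel f) := by
  intro h
  have : Epi f := Preadditive.epi_of_isZero_cokernel f h
  exact hni (isIso_of_mono_of_epi f)

lemma notIsIso_kernelι {V W : C} (e : V ⟶ W) [Epi e] (hW : ¬ IsZero W)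
    (h : IsIso (kernel.ι e)) : False := by
  have he : e = 0 := by
    have := kernel.condition e
    rwa [← cancel_epi (kernel.ι e), comp_zero]
  apply hW
  rw [IsZero.iff_id_eq_zero, ← cancel_epi e, he, comp_zero, zero_comp]

section Additive

variable (rk : C → ℤ)
  (hrk : ∀ S : ShortComplex C, S.ShortExact → rk S.X₂ = rk S.X₁ + rk S.X₃)
include hrk

lemma add_of_isZero {Z : C} (hZ : IsZero Z) : rk Z = 0 := by
  have hS : (ShortComplex.mk (𝟙 Z) (𝟙 Z)
      (by rw [Category.comp_id]; exact hZ.eq_of_src _ _)).ShortExact :=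
    { exact := ShortComplex.exact_of_isZero_X₂ _ hZ }
  have := hrk _ hS
  dsimp at this
  omega

lemma add_mono {F V : C} (f : F ⟶ V) [Mono f] :
    rk V = rk F + rk (cokernel f) := hrk _ (sesMono f)

lemma add_epi {V Q : C} (g : V ⟶ Q) [Epi g] :
    rk Q = rk V - rk (kernel g) := by
  have := hrk _ (sesEpi g)
  dsimp at this
  omega

lemma add_iso {X Y : C} (e : X ≅ Y) : rk X = rk Y := by
  have h := add_mono rk hrk e.hom
  have hz : IsZero (cokernel e.hom) := (isZero_zero C).of_iso (cokernel.ofEpi e.hom)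
  rw [add_of_isZero rk hrk hz] at h
  omega

end Additive

/-! ### Main working section -/

section Main

variable (rk deg : C → ℤ)
  (hrk : ∀ S : ShortComplex C, S.ShortExact → rk S.X₂ = rk S.X₁ + rk S.X₃)
  (hdeg : ∀ S : ShortComplex C, S.ShortExact → deg S.X₂ = deg S.X₁ + deg S.X₃)
  (hrkpos : ∀ X : C, ¬ IsZero X → 0 < rk X) (μ : ℚ)

include hrk hdeg hrkpos

lemma rk_pos' {X : C} (hX : ¬ IsZero X) : (0:ℚ) < (rk X : ℚ) := by
  exact_mod_cast hrkpos X hX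

lemma slope_iso {X Y : C} (e : X ≅ Y) : objSlope rk deg X = objSlope rk deg Y := by
  unfold objSlope
  rw [add_iso rk hrk e, add_iso deg hdeg e]

lemma semistable_iso {X Y : C} (e : X ≅ Y) (hX : Semistable rk deg μ X) :
    Semistable rk deg μ Y := by
  obtain ⟨h1, h2, h3⟩ := hX
  refine ⟨fun h => h1 (h.of_iso e), (slope_iso rk deg hrk hdeg hrkpos e).symm.trans h2, ?_⟩
  intro F f hm hF hni
  have hm' : Mono (f ≫ e.inv) := mono_comp _ _
  refine h3 F (f ≫ e.inv) hm' hF fun hi => hni ?_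
  have : f = (f ≫ e.inv) ≫ e.hom := by simp
  rw [this]
  infer_instance

lemma stable_iso {X Y : C} (e : X ≅ Y) (hX : Stable rk deg μ X) :
    Stable rk deg μ Y := by
  obtain ⟨h1, h2, h3⟩ := hX
  refine ⟨fun h => h1 (h.of_iso e), (slope_iso rk deg hrk hdeg hrkpos e).symm.trans h2, ?_⟩
  intro F f hm hF hni
  have hm' : Mono (f ≫ e.inv) := mono_comp _ _
  refine h3 F (f ≫ e.inv) hm' hF fun hi => hni ?_
  have : f = (f ≫ e.inv) ≫ e.hom := by simp
  rw [this]
  infer_instance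


lemma notIsZero_of_rk_pos {X : C} (h : 0 < rk X) : ¬ IsZero X :=
  fun hz => by rw [add_of_isZero rk hrk hz] at h; omega

lemma slope_ses (S : ShortComplex C) (hS : S.ShortExact) (h1 : ¬ IsZero S.X₁)
    (h3 : ¬ IsZero S.X₃) (h2 : objSlope rk deg S.X₂ = μ) :
    (objSlope rk deg S.X₁ ≤ μ ↔ μ ≤ objSlope rk deg S.X₃) ∧
    (objSlope rk deg S.X₁ = μ ↔ objSlope rk deg S.X₃ = μ) := by
  have hr1 : (0:ℚ) < (rk S.X₁ : ℚ) := rk_pos' rk deg hrk hdeg hrkpos h1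
  have hr3 : (0:ℚ) < (rk S.X₃ : ℚ) := rk_pos' rk deg hrk hdeg hrkpos h3
  have hr := hrk S hS
  have hd := hdeg S hS
  have hsum : ((deg S.X₁ : ℚ) + (deg S.X₃ : ℚ)) / ((rk S.X₁ : ℚ) + (rk S.X₃ : ℚ)) = μ := by
    rw [← h2]
    unfold objSlope
    rw [hr, hd]
    push_cast
    ring_nf
  exact ⟨med_le hr1 hr3 hsum, med_eq hr1 hr3 hsum⟩

/-- A subobject of a semistable object with the same slope is semistable. -/
lemma semistable_sub {F V : C} (f : F ⟶ V) [Mono f] (hV : Semistable rk deg μ V)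
    (hFz : ¬ IsZero F) (hFμ : objSlope rk deg F = μ) : Semistable rk deg μ F := by
  refine ⟨hFz, hFμ, ?_⟩
  intro G g hg hGz hgi
  haveI := hg
  have hm : Mono (g ≫ f) := mono_comp _ _
  have hni : ¬ IsIso (g ≫ f) := fun h => hgi (isIso_of_comp_mono g f h)
  exact hV.2.2 G (g ≫ f) hm hGz hni

/-- A quotient of a semistable object with the same slope is semistable. -/
lemma semistable_quotient {V Q : C} (q : V ⟶ Q) [Epi q] (hV : Semistable rk deg μ V)
    (hQz : ¬ IsZero Q) (hQμ : objSlope rk deg Q = μ) : Semistable rk deg μ Q := by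
  refine ⟨hQz, hQμ, ?_⟩
  intro G g hg hGz hgi
  haveI := hg
  have hWz : ¬ IsZero (cokernel g) := notIsZero_cokernel g hgi
  have he : Epi (q ≫ cokernel.π g) := epi_comp _ _
  haveI := he
  have hμW : μ ≤ objSlope rk deg (cokernel g) := by
    by_cases hKz : IsZero (kernel (q ≫ cokernel.π g))
    · have h1 := add_epi rk hrk (q ≫ cokernel.π g)
      have h2 := add_epi deg hdeg (q ≫ cokernel.π g)
      rw [add_of_isZero rk hrk hKz] at h1
      rw [add_of_isZero deg hdeg hKz] at h2
      have : objSlope rk deg (cokernel g) = μ := by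
        unfold objSlope
        rw [h1, h2]
        simpa [objSlope] using hV.2.1
      exact this.ge
    · have hι : ¬ IsIso (kernel.ι (q ≫ cokernel.π g)) :=
        fun h => notIsIso_kernelι (q ≫ cokernel.π g) hWz h
      have hK := hV.2.2 _ (kernel.ι (q ≫ cokernel.π g)) inferInstance hKz hι
      exact ((slope_ses rk deg hrk hdeg hrkpos μ _ (sesEpi (q ≫ cokernel.π g))
        hKz hWz hV.2.1).1).mp hK
  exact ((slope_ses rk deg hrk hdeg hrkpos μ _ (sesMono g) hGz hWz hQμ).1).mpr hμW

/-- Part 2: simple objects of the semistable category are exactly the stable objects. -/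
lemma simple_iff_stable (V : C) (hV : Semistable rk deg μ V) :
    (∀ (F : C) (f : F ⟶ V), Mono f → Semistable rk deg μ F → ¬ IsIso f → IsZero F)
      ↔ Stable rk deg μ V := by
  constructor
  · intro h
    refine ⟨hV.1, hV.2.1, ?_⟩
    intro F f hm hFz hni
    have hle := hV.2.2 F f hm hFz hni
    rcases lt_or_eq_of_le hle with hlt | heq
    · exact hlt
    · exfalso
      haveI := hm
      exact hFz (h F f hm (semistable_sub rk deg hrk hdeg hrkpos μ f hV hFz heq) hni)
  · intro hst F f hm hsF hni
    by_contra hFz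
    exact absurd hsF.2.1 (ne_of_lt (hst.2.2 F f hm hFz hni))

lemma stable_coker_isoComp {A B A0 : C} (a : A0 ⟶ A) [IsIso a] (f : A ⟶ B)
    (h : Stable rk deg μ (cokernel f)) : Stable rk deg μ (cokernel (a ≫ f)) :=
  stable_iso rk deg hrk hdeg hrkpos μ (cokernelEpiComp a f).symm h

lemma stable_coker_compIso {A B B0 : C} (f : A ⟶ B) (b : B ⟶ B0) [IsIso b]
    (h : Stable rk deg μ (cokernel f)) : Stable rk deg μ (cokernel (f ≫ b)) :=
  stable_iso rk deg hrk hdeg hrkpos μ (cokernelCompIsIso f b).symm h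

/-- Extend a filtration of `F` by a mono `f : F ⟶ V` with stable cokernel. -/
lemma extend {F V : C} (f : F ⟶ V) [Mono f] (hV : Semistable rk deg μ V)
    (hco : Stable rk deg μ (cokernel f))
    (ih : ∃ (n : ℕ) (X : Fin (n + 1) → C) (g : ∀ i : Fin n, X i.castSucc ⟶ X i.succ),
        IsZero (X 0) ∧ Nonempty (X (Fin.last n) ≅ F) ∧
        ∀ i : Fin n, Mono (g i) ∧ Semistable rk deg μ (X i.succ) ∧
          Stable rk deg μ (cokernel (g i))) :
    ∃ (n : ℕ) (X : Fin (n + 1) → C) (g : ∀ i : Fin n, X i.castSucc ⟶ X i.succ),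
        IsZero (X 0) ∧ Nonempty (X (Fin.last n) ≅ V) ∧
        ∀ i : Fin n, Mono (g i) ∧ Semistable rk deg μ (X i.succ) ∧
          Stable rk deg μ (cokernel (g i)) := by
  obtain ⟨m, X, g, h0, ⟨e⟩, hg⟩ := ih
  have hc : ∀ j : Fin (m+1), (Fin.snoc X V : Fin (m+2) → C) j.castSucc = X j := fun j => by
    simp
  have hl : (Fin.snoc X V : Fin (m+2) → C) (Fin.last (m+1)) = V := by simp
  have hsucc : ∀ j : Fin m, (Fin.snoc X V : Fin (m+2) → C) (j.castSucc.succ) = X j.succ :=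
    fun j => by rw [Fin.succ_castSucc]; exact hc j.succ
  have hls : (Fin.snoc X V : Fin (m+2) → C) ((Fin.last m).succ) = V := by
    rw [Fin.succ_last]; exact hl
  refine ⟨m+1, Fin.snoc X V,
    fun i => Fin.lastCases
      (motive := fun i : Fin (m+1) =>
        (Fin.snoc X V : Fin (m+2) → C) i.castSucc ⟶ (Fin.snoc X V : Fin (m+2) → C) i.succ)
      (eqToHom (hc (Fin.last m)) ≫ e.hom ≫ f ≫ eqToHom hls.symm)
      (fun j => eqToHom (hc j.castSucc) ≫ g j ≫ eqToHom (hsucc j).symm) i, ?_, ?_, ?_⟩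
  · have h00 : (Fin.snoc X V : Fin (m+2) → C) (0 : Fin (m+2)) = X 0 := by
      rw [show (0 : Fin (m+2)) = (0 : Fin (m+1)).castSucc by simp]
      exact hc 0
    rw [h00]; exact h0
  · exact ⟨eqToIso hl⟩
  · intro i
    induction i using Fin.lastCases with
    | last =>
      simp only [Fin.lastCases_last]
      refine ⟨inferInstance, ?_, ?_⟩
      · rw [hls]; exact hV
      · exact stable_coker_isoComp rk deg hrk hdeg hrkpos μ _ _
          (stable_coker_isoComp rk deg hrk hdeg hrkpos μ _ _
            (stable_coker_compIso rk deg hrk hdeg hrkpos μ f _ hco))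
    | cast j =>
      simp only [Fin.lastCases_castSucc]
      haveI := (hg j).1
      refine ⟨inferInstance, ?_, ?_⟩
      · rw [hsucc j]; exact (hg j).2.1
      · exact stable_coker_isoComp rk deg hrk hdeg hrkpos μ _ _
          (stable_coker_compIso rk deg hrk hdeg hrkpos μ (g j) _ (hg j).2.2)

end Main

end Stmt2Aux

theorem stmt2 {C : Type*} [Category C] [Abelian C] (rk deg : C → ℤ)
    (hrk : ∀ S : ShortComplex C, S.ShortExact → rk S.X₂ = rk S.X₁ + rk S.X₃)
    (hdeg : ∀ S : ShortComplex C, S.ShortExact → deg S.X₂ = deg S.X₁ + deg S.X₃)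
    (hrkpos : ∀ X : C, ¬ IsZero X → 0 < rk X) (μ : ℚ) :
    -- every semistable object of objSlope μ has finite length in the category of
    -- semistable objects of objSlope μ: it has a finite filtration with stable quotients
    (∀ V : C, Semistable rk deg μ V →
      ∃ (n : ℕ) (X : Fin (n + 1) → C) (f : ∀ i : Fin n, X i.castSucc ⟶ X i.succ),
        IsZero (X 0) ∧ Nonempty (X (Fin.last n) ≅ V) ∧
        ∀ i : Fin n, Mono (f i) ∧ Semistable rk deg μ (X i.succ) ∧
          Stable rk deg μ (cokernel (f i))) ∧
    -- the simple objects of this category are exactly the stable objects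
    (∀ V : C, Semistable rk deg μ V →
      ((∀ (F : C) (f : F ⟶ V), Mono f → Semistable rk deg μ F → ¬ IsIso f → IsZero F)
        ↔ Stable rk deg μ V)) := by
    classical
  open Stmt2Aux in
  refine ⟨?_, fun V hV => simple_iff_stable rk deg hrk hdeg hrkpos μ V hV⟩
  have key : ∀ (n : ℕ) (V : C), Semistable rk deg μ V → (rk V).toNat = n →
      ∃ (n : ℕ) (X : Fin (n + 1) → C) (f : ∀ i : Fin n, X i.castSucc ⟶ X i.succ),
        IsZero (X 0) ∧ Nonempty (X (Fin.last n) ≅ V) ∧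
        ∀ i : Fin n, Mono (f i) ∧ Semistable rk deg μ (X i.succ) ∧
          Stable rk deg μ (cokernel (f i)) := by
    intro n
    induction n using Nat.strong_induction_on with
    | _ n IH =>
      intro V hV hn
      by_cases hst : Stable rk deg μ V
      · -- V is stable: one-step filtration 0 ⊂ V
        haveI : Mono (0 : (0 : C) ⟶ V) := mono_of_source_iso_zero _ (Iso.refl _)
        refine Stmt2Aux.extend rk deg hrk hdeg hrkpos μ (0 : (0 : C) ⟶ V) hV
          (Stmt2Aux.stable_iso rk deg hrk hdeg hrkpos μ cokernelZeroIsoTarget.symm hst)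
          ⟨0, fun _ => (0 : C), fun i => i.elim0, isZero_zero C, ⟨Iso.refl _⟩,
            fun i => i.elim0⟩
      · -- V is not stable: find a maximal proper nonzero semistable subobject
        have hns := (Stmt2Aux.simple_iff_stable rk deg hrk hdeg hrkpos μ V hV).not.mpr hst
        push_neg at hns
        obtain ⟨F₀, f₀, hm₀, hsF₀, hni₀, _⟩ := hns
        set P : ℕ → Prop := fun r => ∃ (F : C) (f : F ⟶ V),
          Mono f ∧ Semistable rk deg μ F ∧ ¬ IsIso f ∧ (rk F).toNat = r with hP
        have hbound : ∀ r, P r → r ≤ (rk V).toNat := by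
          rintro r ⟨F, f, hm, hsF, hni, hr⟩
          haveI := hm
          have h1 := Stmt2Aux.add_mono rk hrk f
          have h2 : (0:ℤ) ≤ rk (cokernel f) := by
            by_cases h : IsZero (cokernel f)
            · rw [Stmt2Aux.add_of_isZero rk hrk h]
            · exact (hrkpos _ h).le
          omega
        have hP0 : P (Nat.findGreatest P (rk V).toNat) :=
          Nat.findGreatest_spec (hbound _ ⟨F₀, f₀, hm₀, hsF₀, hni₀, rfl⟩)
            ⟨F₀, f₀, hm₀, hsF₀, hni₀, rfl⟩
        obtain ⟨F, f, hm, hsF, hni, hr0⟩ := hP0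
        haveI := hm
        have hFz : ¬ IsZero F := hsF.1
        have hrkF : 0 < rk F := hrkpos F hFz
        have hQz : ¬ IsZero (cokernel f) := Stmt2Aux.notIsZero_cokernel f hni
        have hrkQ : 0 < rk (cokernel f) := hrkpos _ hQz
        have hradd := Stmt2Aux.add_mono rk hrk f
        have hQμ : objSlope rk deg (cokernel f) = μ :=
          ((Stmt2Aux.slope_ses rk deg hrk hdeg hrkpos μ _ (Stmt2Aux.sesMono f)
            hFz hQz hV.2.1).2).mp hsF.2.1
        have hQss : Semistable rk deg μ (cokernel f) :=
          Stmt2Aux.semistable_quotient rk deg hrk hdeg hrkpos μ (cokernel.π f) hV hQz hQμ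
        have hQst : Stable rk deg μ (cokernel f) := by
          by_contra hq
          have hns' := (Stmt2Aux.simple_iff_stable rk deg hrk hdeg hrkpos μ
            (cokernel f) hQss).not.mpr hq
          push_neg at hns'
          obtain ⟨G, g, hgm, hsG, hgi, hGz'⟩ := hns'
          haveI := hgm
          have hGz : ¬ IsZero G := hsG.1
          haveI : Epi (cokernel.π f ≫ cokernel.π g) := epi_comp _ _
          have hWz : ¬ IsZero (cokernel g) := Stmt2Aux.notIsZero_cokernel g hgi
          have hK := Stmt2Aux.add_epi rk hrk (cokernel.π f ≫ cokernel.π g)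
          have hQadd := Stmt2Aux.add_mono rk hrk g
          have hrkG : 0 < rk G := hrkpos G hGz
          have rkK : rk (kernel (cokernel.π f ≫ cokernel.π g)) = rk F + rk G := by omega
          have hKz : ¬ IsZero (kernel (cokernel.π f ≫ cokernel.π g)) := by
            intro h
            rw [Stmt2Aux.add_of_isZero rk hrk h] at rkK
            omega
          have hι : ¬ IsIso (kernel.ι (cokernel.π f ≫ cokernel.π g)) :=
            fun h => Stmt2Aux.notIsIso_kernelι _ hWz h
          have hWμ : objSlope rk deg (cokernel g) = μ :=
            ((Stmt2Aux.slope_ses rk deg hrk hdeg hrkpos μ _ (Stmt2Aux.sesMono g)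
              hGz hWz hQμ).2).mp hsG.2.1
          have hKμ : objSlope rk deg (kernel (cokernel.π f ≫ cokernel.π g)) = μ :=
            ((Stmt2Aux.slope_ses rk deg hrk hdeg hrkpos μ _
              (Stmt2Aux.sesEpi (cokernel.π f ≫ cokernel.π g)) hKz hWz hV.2.1).2).mpr hWμ
          have hKss : Semistable rk deg μ (kernel (cokernel.π f ≫ cokernel.π g)) :=
            Stmt2Aux.semistable_sub rk deg hrk hdeg hrkpos μ
              (kernel.ι (cokernel.π f ≫ cokernel.π g)) hV hKz hKμ
          have hPK : P (rk (kernel (cokernel.π f ≫ cokernel.π g))).toNat :=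
            ⟨_, kernel.ι (cokernel.π f ≫ cokernel.π g), inferInstance, hKss, hι, rfl⟩
          have h2 := Nat.le_findGreatest (hbound _ hPK) hPK
          omega
        -- inductive hypothesis on F
        have hlt : (rk F).toNat < n := by omega
        exact Stmt2Aux.extend rk deg hrk hdeg hrkpos μ f hV hQst
          (IH _ hlt F hsF rfl)
  exact fun V hV => key _ V hV rfl
end
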